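/- Let Φ : ℝⁿ → ℝᴺ be a linear map and consider the action of ℝⁿ on the torus 𝕋ᴺ = ℝᴺ/ℤᴺ given by x · φ = φ + Φ(x) mod ℤᴺ. An orbit of this action is dense in 𝕋ᴺ if and only if there is no nonzero integral vector k ∈ ℤᴺ orthogonal to the subspace Φ(ℝⁿ) ⊆ ℝᴺ. -/

import Mathlib

open Filter Topology Submodule Module
open scoped RealInnerProductSpace


open Filter Topology

theorem isolated_zero_of_no_line {E : Type*} [NormedAddCommGroup E] [NormedSpace ℝ E]
    [FiniteDimensional ℝ E] (Γ : AddSubgroup E) (hc : IsClosed (Γ : Set E))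
    (hl : ∀ u : E, u ≠ 0 → ∃ t : ℝ, t • u ∉ Γ) :
    ∃ ε > 0, ∀ γ ∈ Γ, ‖γ‖ < ε → γ = 0 := by
  by_contra h
  push_neg at h
  have hseq : ∀ m : ℕ, ∃ γ ∈ Γ, ‖γ‖ < 1/(m+1) ∧ γ ≠ 0 := fun m =>
    h (1/(m+1)) (by positivity)
  choose γ hγΓ hγn hγ0 using hseq
  set u : ℕ → E := fun m => ‖γ m‖⁻¹ • γ m with hu
  have hnorm_pos : ∀ m, (0:ℝ) < ‖γ m‖ := fun m => norm_pos_iff.mpr (hγ0 m)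
  have husphere : ∀ m, u m ∈ Metric.sphere (0:E) 1 := by
    intro m
    simp [u, norm_smul, abs_of_pos (inv_pos.mpr (hnorm_pos m)),
      inv_mul_cancel₀ (hnorm_pos m).ne']
  obtain ⟨v, hv, φ, hφ, hvt⟩ :=
    (isCompact_sphere (0:E) 1).tendsto_subseq husphere
  have hv0 : v ≠ 0 := by
    intro h0; rw [h0] at hv; simp at hv
  have hnt : Tendsto (fun m => ‖γ (φ m)‖) atTop (𝓝 0) :=
    squeeze_zero (fun m => (hnorm_pos _).le) (fun m => (hγn (φ m)).le)
      (tendsto_one_div_add_atTop_nhds_zero_nat.comp hφ.tendsto_atTop)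
  obtain ⟨t, ht⟩ := hl v hv0
  apply ht
  have hscal : Tendsto (fun m => (⌊t / ‖γ (φ m)‖⌋ : ℝ) * ‖γ (φ m)‖) atTop (𝓝 t) := by
    have hd : ∀ m, |(⌊t / ‖γ (φ m)‖⌋ : ℝ) * ‖γ (φ m)‖ - t| ≤ ‖γ (φ m)‖ := by
      intro m
      have hp := hnorm_pos (φ m)
      have h1 : (⌊t / ‖γ (φ m)‖⌋ : ℝ) ≤ t / ‖γ (φ m)‖ := Int.floor_le _
      have h2 : t / ‖γ (φ m)‖ < ⌊t / ‖γ (φ m)‖⌋ + 1 := Int.lt_floor_add_one _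
      have h1' := mul_le_mul_of_nonneg_right h1 hp.le
      have h2' := mul_lt_mul_of_pos_right h2 hp
      rw [div_mul_cancel₀ _ hp.ne'] at h1' h2'
      rw [abs_le]
      constructor <;> nlinarith
    have : Tendsto (fun m => (⌊t / ‖γ (φ m)‖⌋ : ℝ) * ‖γ (φ m)‖ - t) atTop (𝓝 0) :=
      squeeze_zero_norm hd hnt
    simpa using this.add_const t
  have key : Tendsto (fun m => ((⌊t / ‖γ (φ m)‖⌋ : ℝ) * ‖γ (φ m)‖) • u (φ m))
      atTop (𝓝 (t • v)) := hscal.smul hvt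
  have hmem : ∀ m, ((⌊t / ‖γ (φ m)‖⌋ : ℝ) * ‖γ (φ m)‖) • u (φ m) ∈ Γ := by
    intro m
    have : ((⌊t / ‖γ (φ m)‖⌋ : ℝ) * ‖γ (φ m)‖) • u (φ m) = ⌊t / ‖γ (φ m)‖⌋ • γ (φ m) := by
      rw [hu]
      rw [smul_smul, ← Int.cast_smul_eq_zsmul ℝ]
      congr 1
      rw [mul_assoc, mul_inv_cancel₀ (hnorm_pos (φ m)).ne', mul_one]
    rw [this]
    exact AddSubgroup.zsmul_mem _ (hγΓ _) _
  exact hc.mem_of_tendsto key (Eventually.of_forall hmem)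
open scoped RealInnerProductSpace

variable {E : Type*} [NormedAddCommGroup E] [InnerProductSpace ℝ E] [FiniteDimensional ℝ E]

theorem exists_dual_int (H : AddSubgroup E) (hc : IsClosed (H : Set E)) (hne : H ≠ ⊤) :
    ∃ u : E, u ≠ 0 ∧ ∀ h ∈ H, ∃ m : ℤ, ⟪u, h⟫ = (m : ℝ) := by
  classical
  -- the largest subspace contained in H
  let U : Submodule ℝ E :=
    { carrier := {x | ∀ t : ℝ, t • x ∈ H}
      add_mem' := fun {a b} ha hb t => by
        have := H.add_mem (ha t) (hb t); rwa [← smul_add] at this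
      zero_mem' := fun t => by simpa using H.zero_mem
      smul_mem' := fun c x hx t => by
        have := hx (t * c); rwa [mul_smul] at this }
  have hUH : (U : Set E) ⊆ H := fun x hx => by simpa using hx 1
  set W := Uᗮ with hW
  have hWU : Wᗮ = U := Submodule.orthogonal_orthogonal U
  -- projection facts
  have hproj_mem : ∀ h ∈ H, ((orthogonalProjection W h : W) : E) ∈ H := by
    intro h hh
    have h1 : h - (orthogonalProjection W h : E) ∈ Wᗮ :=
      W.sub_starProjection_mem_orthogonal h
    rw [hWU] at h1
    have := H.sub_mem hh (hUH h1)
    simpa using this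
  -- the trace of H on W
  let Γ : AddSubgroup W := H.comap W.subtype.toAddMonoidHom
  have hΓ_mem : ∀ γ : W, γ ∈ Γ ↔ (γ : E) ∈ H := fun γ => Iff.rfl
  have hkey : ∀ (u' : W) (h : E), ⟪(u' : E), h⟫ = ⟪u', orthogonalProjection W h⟫ := by
    intro u' h
    set γ : W := orthogonalProjection W h with hγ
    have h1 : h - (γ : E) ∈ Wᗮ := W.sub_starProjection_mem_orthogonal h
    have h2 : ⟪(u' : E), h - (γ : E)⟫ = 0 :=
      Submodule.inner_right_of_mem_orthogonal u'.2 h1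
    have h4 : (γ : E) + (h - (γ : E)) = h := by abel
    have h5 : ⟪(u' : E), h⟫ = ⟪(u' : E), (γ : E)⟫ + ⟪(u' : E), h - (γ : E)⟫ := by
      rw [← inner_add_right, h4]
    rw [h5, h2, add_zero]
    rfl
  have hΓ_closed : IsClosed (Γ : Set W) := by
    have : (Γ : Set W) = (Subtype.val) ⁻¹' (H : Set E) := rfl
    rw [this]
    exact hc.preimage continuous_subtype_val
  have hΓ_noline : ∀ w : W, w ≠ 0 → ∃ t : ℝ, t • w ∉ Γ := by
    intro w hw
    by_contra hcon
    push_neg at hcon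
    have hwU : (w : E) ∈ U := by
      intro t
      have := hcon t
      rw [hΓ_mem] at this
      simpa using this
    have : (w : E) = 0 := by
      have h0 : ⟪(w : E), (w : E)⟫ = 0 := (Submodule.mem_orthogonal U (w : E)).mp w.2 _ hwU
      exact inner_self_eq_zero.mp h0
    exact hw (Subtype.coe_injective (by simpa using this))
  obtain ⟨ε, hε, hiso⟩ := isolated_zero_of_no_line Γ hΓ_closed hΓ_noline
  let L : Submodule ℤ W := AddSubgroup.toIntSubmodule Γ
  have hLdisc : DiscreteTopology L := by
    rw [discreteTopology_iff_isOpen_singleton_zero]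
    have : ({0} : Set L) = (Subtype.val) ⁻¹' (Metric.ball (0 : W) ε) := by
      ext x
      simp only [Set.mem_singleton_iff, Set.mem_preimage, Metric.mem_ball, dist_zero_right]
      constructor
      · rintro rfl; simpa using hε
      · intro hx
        exact Subtype.coe_injective (hiso _ x.2 hx)
    rw [this]
    exact isOpen_induced Metric.isOpen_ball
  by_cases hspan : Submodule.span ℝ (L : Set W) = ⊤
  · -- L is a full lattice in W; use a ℤ-basis and its dual vector
    have hWnebot : W ≠ ⊥ := by
      intro hbot
      apply hne
      have hUtop : U = ⊤ := by
        rwa [hW, Submodule.orthogonal_eq_bot_iff] at hbot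
      rw [AddSubgroup.eq_top_iff']
      intro x
      exact hUH (by rw [hUtop]; trivial)
    have : IsZLattice ℝ L := ⟨hspan⟩
    have hfree : Module.Free ℤ L := ZLattice.module_free ℝ L
    have hfin : Module.Finite ℤ L := ZLattice.module_finite ℝ L
    let ι := Module.Free.ChooseBasisIndex ℤ L
    let b : Basis ι ℤ L := Module.Free.chooseBasis ℤ L
    have hrank : Fintype.card ι = finrank ℝ W := by
      rw [← finrank_eq_card_chooseBasisIndex, ZLattice.rank ℝ L]
    have hιne : Nonempty ι := by
      rw [← Fintype.card_pos_iff, hrank]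
      have : Nontrivial W := Submodule.nontrivial_iff_ne_bot.mpr hWnebot
      exact finrank_pos
    obtain ⟨i₀⟩ := hιne
    let bR : Basis ι ℝ W := b.ofZLatticeBasis ℝ L
    let f : W →ₗ[ℝ] ℝ := bR.coord i₀
    let u' : W := (InnerProductSpace.toDual ℝ W).symm
      ⟨f, LinearMap.continuous_of_finiteDimensional f⟩
    have hu'inner : ∀ x : W, ⟪u', x⟫ = f x := fun x =>
      InnerProductSpace.toDual_symm_apply
    refine ⟨(u' : E), ?_, ?_⟩
    · intro h0
      have hu'0 : u' = 0 := Subtype.coe_injective (by simpa using h0)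
      have : f (bR i₀) = 1 := by simp [f]
      rw [← hu'inner, hu'0] at this
      simp at this
    · intro h hh
      set γ : W := orthogonalProjection W h with hγ
      have hγΓ : γ ∈ Γ := (hΓ_mem γ).mpr (hproj_mem h hh)
      have hsplit : ⟪(u' : E), h⟫ = ⟪u', γ⟫ := hkey u' h
      refine ⟨b.repr ⟨γ, hγΓ⟩ i₀, ?_⟩
      rw [hsplit, hu'inner]
      have := b.ofZLatticeBasis_repr_apply ℝ L ⟨γ, hγΓ⟩ i₀
      simpa [f] using this
  · -- L does not span W: pick a vector orthogonal to its span (inside W)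
    have : (Submodule.span ℝ (L : Set W))ᗮ ≠ ⊥ := by
      rwa [ne_eq, Submodule.orthogonal_eq_bot_iff]
    obtain ⟨u', hu'mem, hu'0⟩ := Submodule.exists_mem_ne_zero_of_ne_bot this
    refine ⟨(u' : E), ?_, ?_⟩
    · intro h0
      exact hu'0 (Subtype.coe_injective (by simpa using h0))
    · intro h hh
      set γ : W := orthogonalProjection W h with hγ
      have hγΓ : γ ∈ Γ := (hΓ_mem γ).mpr (hproj_mem h hh)
      refine ⟨0, ?_⟩
      have hsplit : ⟪(u' : E), h⟫ = ⟪u', γ⟫ := hkey u' h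
      rw [hsplit]
      have hγspan : γ ∈ Submodule.span ℝ (L : Set W) :=
        Submodule.subset_span (by exact hγΓ)
      have := (Submodule.mem_orthogonal _ u').mp hu'mem γ hγspan
      rw [real_inner_comm] at this
      simpa using this

private lemma homeo_dense_image {X Y : Type*} [TopologicalSpace X] [TopologicalSpace Y]
    (e : X ≃ₜ Y) {s : Set X} : Dense (⇑e '' s) ↔ Dense s := by
  constructor
  · intro h
    have := (e.symm.surjective.denseRange).dense_image e.symm.continuous h
    rw [Set.image_image] at this
    simpa using this
  · intro h
    exact (e.surjective.denseRange).dense_image e.continuous h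

/-- An orbit of the ℝⁿ-action on 𝕋ᴺ = ℝᴺ/ℤᴺ given by a linear map Φ : ℝ ⁿ → ℝᴺ is dense
iff no nonzero integral vector is orthogonal to Φ(ℝⁿ). -/
theorem orbit_dense_iff_no_integral_orthogonal (n N : ℕ)
    (Φ : (Fin n → ℝ) →ₗ[ℝ] (Fin N → ℝ)) (φ₀ : Fin N → AddCircle (1 : ℝ)) :
    Dense (Set.range fun x : Fin n → ℝ =>
        fun i => φ₀ i + ((Φ x i : ℝ) : AddCircle (1 : ℝ))) ↔
      ∀ k : Fin N → ℤ, (∀ x : Fin n → ℝ, ∑ i, (k i : ℝ) * Φ x i = 0) → k = 0 := by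
  classical
  set π : (Fin N → ℝ) → (Fin N → AddCircle (1 : ℝ)) := fun x i => (x i : AddCircle (1:ℝ)) with hπ
  have hπcont : Continuous π :=
    continuous_pi fun i => (AddCircle.continuous_mk' 1).comp (continuous_apply i)
  have hπopen : IsOpenMap π :=
    IsOpenMap.piMap (fun i => QuotientAddGroup.isOpenMap_coe)
      (Eventually.of_forall fun i => QuotientAddGroup.mk_surjective)
  have hπsurj : Function.Surjective π := by
    intro φ
    choose x hx using fun i => QuotientAddGroup.mk_surjective (φ i)
    exact ⟨x, funext hx⟩
  have hπadd : ∀ a b, π (a + b) = π a + π b := by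
    intro a b; funext i; simp [π]
  set V : Submodule ℝ (Fin N → ℝ) := LinearMap.range Φ with hV
  set Lat : AddSubgroup (Fin N → ℝ) :=
    AddSubgroup.pi Set.univ (fun _ => AddSubgroup.zmultiples (1:ℝ)) with hLat
  have hLatπ : ∀ z ∈ Lat, π z = 0 := by
    intro z hz
    funext i
    obtain ⟨m, hm⟩ := hz i (Set.mem_univ i)
    simp only [π, Pi.zero_apply]
    rw [AddCircle.coe_eq_zero_iff]
    exact ⟨m, hm⟩
  set G : AddSubgroup (Fin N → ℝ) := V.toAddSubgroup ⊔ Lat with hG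
  -- Step A: density of the orbit is equivalent to density of G
  have horbit : (Set.range fun x : Fin n → ℝ =>
      fun i => φ₀ i + ((Φ x i : ℝ) : AddCircle (1 : ℝ)))
      = (fun φ => φ₀ + φ) '' (π '' (V : Set (Fin N → ℝ))) := by
    ext φ
    constructor
    · rintro ⟨x, rfl⟩
      exact ⟨π (Φ x), ⟨Φ x, ⟨x, rfl⟩, rfl⟩, rfl⟩
    · rintro ⟨_, ⟨v, ⟨x, rfl⟩, rfl⟩, rfl⟩
      exact ⟨x, rfl⟩
  have hsat : π ⁻¹' (π '' (V : Set (Fin N → ℝ))) = (G : Set (Fin N → ℝ)) := by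
    ext x
    simp only [Set.mem_preimage, Set.mem_image, SetLike.mem_coe]
    constructor
    · rintro ⟨v, hv, hvx⟩
      have hd : x - v ∈ Lat := by
        intro i _
        have : (v i : AddCircle (1:ℝ)) = (x i : AddCircle (1:ℝ)) := congrFun hvx i
        have := (QuotientAddGroup.eq_iff_sub_mem).mp this.symm
        simpa using this
      rw [hG]
      rw [AddSubgroup.mem_sup]
      exact ⟨v, hv, x - v, hd, by abel⟩
    · intro hx
      rw [hG, AddSubgroup.mem_sup] at hx
      obtain ⟨v, hv, z, hz, rfl⟩ := hx
      refine ⟨v, hv, ?_⟩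
      rw [hπadd, hLatπ z hz, add_zero]
  have hA : Dense (π '' (V : Set (Fin N → ℝ))) ↔ Dense (G : Set (Fin N → ℝ)) := by
    constructor
    · intro hd
      rw [← hsat]
      exact hd.preimage hπopen
    · intro hd
      have h1 : π '' (G : Set (Fin N → ℝ)) = π '' (V : Set (Fin N → ℝ)) := by
        refine subset_antisymm ?_ (Set.image_mono (f := π) ?_)
        · rw [← hsat]
          exact Set.image_preimage_subset π _
        · intro v hv
          rw [hG]
          exact SetLike.le_def.mp le_sup_left hv
      rw [← h1]
      exact (hπsurj.denseRange).dense_image hπcont hd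
  have hA2 : Dense (Set.range fun x : Fin n → ℝ =>
      fun i => φ₀ i + ((Φ x i : ℝ) : AddCircle (1 : ℝ))) ↔ Dense (G : Set (Fin N → ℝ)) := by
    rw [horbit, ← hA]
    exact homeo_dense_image (Homeomorph.addLeft φ₀)
  rw [hA2]
  constructor
  · -- easy direction: dense ⇒ no nonzero integral orthogonal vector
    intro hd k hkorth
    by_contra hk0
    set f : (Fin N → ℝ) → ℝ := fun y => ∑ i, (k i : ℝ) * y i with hf
    have hfc : Continuous f := continuous_finset_sum _ fun i _ => continuous_const.mul (continuous_apply i)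
    have himg : ∀ g ∈ G, ∃ m : ℤ, f g = (m : ℝ) := by
      intro g hg
      rw [hG, AddSubgroup.mem_sup] at hg
      obtain ⟨v, hv, z, hz, rfl⟩ := hg
      obtain ⟨x, rfl⟩ := hv
      choose mz hmz using fun i => (AddSubgroup.mem_zmultiples_iff).mp (hz i (Set.mem_univ i))
      refine ⟨∑ i, k i * mz i, ?_⟩
      have hsplitf : f (Φ x + z) = f (Φ x) + f z := by
        simp [f, mul_add, Finset.sum_add_distrib]
      have h0 : f (Φ x) = 0 := hkorth x
      rw [hsplitf, h0, zero_add]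
      have hfz : f z = ∑ i, (k i : ℝ) * (mz i : ℝ) :=
        Finset.sum_congr rfl fun i _ => by rw [← hmz i]; simp
      rw [hfz]
      push_cast
      ring
    obtain ⟨i₀, hi₀⟩ := Function.ne_iff.mp hk0
    set S : ℝ := ∑ i, (k i : ℝ)^2 with hS
    have hSpos : 0 < S := by
      refine Finset.sum_pos' (fun i _ => sq_nonneg _) ⟨i₀, Finset.mem_univ _, ?_⟩
      have : ((k i₀ : ℝ)) ≠ 0 := Int.cast_ne_zero.mpr hi₀
      positivity
    set w : Fin N → ℝ := (1/(2*S)) • (fun i => (k i : ℝ)) with hw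
    have key : ∀ c : ℝ, ∑ i, (k i : ℝ) * (c * (k i : ℝ)) = c * S := by
      intro c
      rw [hS, Finset.mul_sum]
      exact Finset.sum_congr rfl fun i _ => by ring
    have hfw : f w = 1/2 := by
      have h1 : f w = (1/(2*S)) * S := by
        simp only [f, w, Pi.smul_apply, smul_eq_mul]
        exact key _
      rw [h1]
      field_simp
    have hwcl : w ∈ closure (G : Set (Fin N → ℝ)) := hd _
    have h2 : f w ∈ closure (f '' (G : Set (Fin N → ℝ))) :=
      image_closure_subset_closure_image hfc ⟨w, hwcl, rfl⟩
    have hsub : f '' (G : Set (Fin N → ℝ)) ⊆ Set.range ((↑) : ℤ → ℝ) := by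
      rintro _ ⟨g, hg, rfl⟩
      obtain ⟨m, hm⟩ := himg g hg
      exact ⟨m, hm.symm⟩
    have h3 : f w ∈ Set.range ((↑) : ℤ → ℝ) := by
      have := closure_mono hsub h2
      rwa [Int.isClosedEmbedding_coe_real.isClosed_range.closure_eq] at this
    obtain ⟨m, hm⟩ := h3
    rw [hfw] at hm
    have h4 : ((2*m : ℤ) : ℝ) = 1 := by push_cast; linarith
    have h5 : (2*m : ℤ) = 1 := by exact_mod_cast h4
    omega
  · -- hard direction
    intro hk
    by_contra hnd
    set eE : (Fin N → ℝ) ≃L[ℝ] EuclideanSpace ℝ (Fin N) :=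
      (PiLp.continuousLinearEquiv 2 ℝ fun _ : Fin N => ℝ).symm with heE
    have htrans : Dense (G : Set (Fin N → ℝ)) ↔ Dense (⇑eE '' (G : Set (Fin N → ℝ))) :=
      (homeo_dense_image eE.toHomeomorph).symm
    set G' : AddSubgroup (EuclideanSpace ℝ (Fin N)) :=
      G.map eE.toLinearEquiv.toAddEquiv.toAddMonoidHom with hG'
    have hG'coe : (G' : Set (EuclideanSpace ℝ (Fin N))) = ⇑eE '' (G : Set (Fin N → ℝ)) := by
      rw [hG', AddSubgroup.coe_map]
      congr 1
    set H : AddSubgroup (EuclideanSpace ℝ (Fin N)) := G'.topologicalClosure with hH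
    have hHne : H ≠ ⊤ := by
      intro htop
      apply hnd
      rw [htrans, ← hG'coe, dense_iff_closure_eq, AddSubgroup.topologicalClosure_coe.symm.trans
        (congrArg _ htop)]
      rfl
    obtain ⟨u, hu0, hint⟩ :=
      exists_dual_int H (AddSubgroup.isClosed_topologicalClosure G') hHne
    have hmemH : ∀ g ∈ G, eE g ∈ H := fun g hg =>
      G'.le_topologicalClosure (AddSubgroup.mem_map.mpr ⟨g, hg, rfl⟩)
    have hEcoord : ∀ (y : Fin N → ℝ) (i : Fin N), eE y i = y i := fun y i => rfl
    have hinner : ∀ y : Fin N → ℝ, ⟪u, eE y⟫ = ∑ i, u i * y i := by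
      intro y
      rw [PiLp.inner_apply]
      exact Finset.sum_congr rfl fun i _ => by
        rw [RCLike.inner_apply, conj_trivial, hEcoord, mul_comm]
    have hlat_single : ∀ i, Pi.single i (1:ℝ) ∈ Lat := by
      intro i
      rw [hLat]
      refine (AddSubgroup.mem_pi Set.univ).mpr fun j _ => ?_
      rw [AddSubgroup.mem_zmultiples_iff]
      rcases eq_or_ne j i with rfl | hj
      · exact ⟨1, by simp⟩
      · exact ⟨0, by simp [Pi.single_eq_of_ne hj]⟩
    have hui : ∀ i, ∃ m : ℤ, u i = (m : ℝ) := by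
      intro i
      have hmem : eE (Pi.single i 1) ∈ H :=
        hmemH _ (SetLike.le_def.mp le_sup_right (hlat_single i))
      obtain ⟨m, hm⟩ := hint _ hmem
      rw [hinner] at hm
      refine ⟨m, ?_⟩
      rw [← hm]
      rw [Finset.sum_eq_single i]
      · simp
      · intro j _ hj
        simp [Pi.single_eq_of_ne hj]
      · intro h
        exact absurd (Finset.mem_univ i) h
    choose m hm using hui
    refine absurd (hk m ?_) fun h0 => hu0 ?_
    · intro x
      set c : ℝ := ∑ i, (m i : ℝ) * Φ x i with hc
      have hct : ∀ t : ℝ, ∃ mm : ℤ, t * c = (mm : ℝ) := by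
        intro t
        have hVmem : t • Φ x ∈ V := V.smul_mem t (LinearMap.mem_range.mpr ⟨x, rfl⟩)
        have hmemv : eE (t • Φ x) ∈ H :=
          hmemH _ (SetLike.le_def.mp le_sup_left hVmem)
        obtain ⟨mm, hmm⟩ := hint _ hmemv
        rw [hinner] at hmm
        refine ⟨mm, ?_⟩
        rw [← hmm, hc, Finset.mul_sum]
        exact Finset.sum_congr rfl fun i _ => by rw [hm i]; simp; ring
      by_contra hc0
      obtain ⟨mm, hmm⟩ := hct (1/(2*c))
      rw [one_div_mul_eq_div, div_eq_iff (by exact mul_ne_zero two_ne_zero hc0 : 2*c ≠ 0)] at hmm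
      have h5 : (2*(mm:ℝ) - 1) * c = 0 := by linear_combination (-1 : ℝ) * hmm
      rcases mul_eq_zero.mp h5 with h6 | h6
      · have h7 : ((2*mm - 1 : ℤ) : ℝ) = 0 := by push_cast; linarith
        have h8 : (2*mm - 1 : ℤ) = 0 := by exact_mod_cast h7
        omega
      · exact hc0 h6
    · ext i
      rw [hm i, h0]
      simp
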